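/- Let G be a finite group acting on a finite set X, U a projective unitary representation of G on H, V a projective unitary representation of G on K, and M an (X,U)-covariant POVM. For each orbit O fix a state σ'_O on K and define the H_O-invariant state σ_O := (#H_O)^{-1} ∑_{h∈H_O} V(h) σ'_O V(h)*. Then the family I^{nuc}_x(ρ) := tr[ρ M_x] · V(g_x) σ_O V(g_x)* (for x ∈ O, x = g_x·x_O) is a well-defined (X,U,V)-covariant instrument measuring M, i.e. tr[I^{nuc}_x(ρ)] = tr[ρ M_x] for all states ρ and I^{nuc}_{gx}(U(g)ρU(g)*) = V(g) I^{nuc}_x(ρ) V(g)* for all g. -/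

import Mathlib

open ContinuousLinearMap
noncomputable section

set_option maxHeartbeats 1600000 in
/-- Given an `(X,U)`-covariant POVM `M` and, for each orbit, a state `σ'`
averaged over the stabilizer into `σ`, the family
`I x ρ := tr[ρ M x] • V(gₓ) σ V(gₓ)*` is a well-defined `(X,U,V)`-covariant
(nuclear) instrument measuring `M`. -/
theorem nuclear_covariant_instrument
    {G X H K : Type*} [Group G] [Fintype G] [Fintype X] [DecidableEq X] [MulAction G X]
    [NormedAddCommGroup H] [InnerProductSpace ℂ H] [FiniteDimensional ℂ H]
    [NormedAddCommGroup K] [InnerProductSpace ℂ K] [FiniteDimensional ℂ K]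
    (U : G → (H →L[ℂ] H)) (V : G → (K →L[ℂ] K)) (m : G → G → ℂ)
    (hUu : ∀ g, adjoint (U g) ∘L U g = 1 ∧ U g ∘L adjoint (U g) = 1)
    (hVu : ∀ g, adjoint (V g) ∘L V g = 1 ∧ V g ∘L adjoint (V g) = 1)
    (hm : ∀ g h, ‖m g h‖ = 1)
    (hUproj : ∀ g h, U (g * h) = m g h • (U g ∘L U h))
    (hVproj : ∀ g h, V (g * h) = m g h • (V g ∘L V h))
    (M : X → (H →L[ℂ] H))
    (hMpos : ∀ x, (M x).IsPositive) (hMnorm : ∑ x, M x = 1)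
    (hMcov : ∀ (g : G) (x : X), M (g • x) = U g ∘L M x ∘L adjoint (U g))
    -- orbit data: `b x` is the base point of the orbit of `x`, `gx x • b x = x`
    (b : X → X) (gx : X → G)
    (hb : ∀ (g : G) (x : X), b (g • x) = b x) (hgx : ∀ x, gx x • b x = x)
    -- a state `σ'` on `K` for each orbit
    (σ' : X → (K →L[ℂ] K)) (hσ'orb : ∀ (g : G) (x : X), σ' (g • x) = σ' x)
    (hσ'pos : ∀ x, (σ' x).IsPositive)
    (hσ'tr : ∀ x, LinearMap.trace ℂ K (σ' x : K →ₗ[ℂ] K) = 1)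
    -- the stabilizer-averaged state `σ`
    (σ : X → (K →L[ℂ] K))
    (hσ : ∀ x, σ x =
      (((Finset.univ.filter fun h : G => h • b x = b x).card : ℂ))⁻¹ •
        ∑ h ∈ Finset.univ.filter (fun h : G => h • b x = b x),
          V h ∘L σ' x ∘L adjoint (V h))
    -- the nuclear instrument
    (I : X → (H →L[ℂ] H) → (K →L[ℂ] K))
    (hI : ∀ x ρ, I x ρ =
      (LinearMap.trace ℂ H ((ρ ∘L M x : H →L[ℂ] H) : H →ₗ[ℂ] H)) •
        (V (gx x) ∘L σ x ∘L adjoint (V (gx x)))) :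
    -- `I` measures `M`
    (∀ (x : X) (ρ : H →L[ℂ] H), ρ.IsPositive →
        LinearMap.trace ℂ H (ρ : H →ₗ[ℂ] H) = 1 →
        LinearMap.trace ℂ K ((I x ρ : K →L[ℂ] K) : K →ₗ[ℂ] K)
          = LinearMap.trace ℂ H ((ρ ∘L M x : H →L[ℂ] H) : H →ₗ[ℂ] H)) ∧
    -- well-definedness: independence of the choice of `gₓ`
    (∀ (g' : G) (x : X), g' • b x = x →
        V g' ∘L σ x ∘L adjoint (V g') = V (gx x) ∘L σ x ∘L adjoint (V (gx x))) ∧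
    -- `(X,U,V)`-covariance
    (∀ (g : G) (x : X) (ρ : H →L[ℂ] H),
        I (g • x) (U g ∘L ρ ∘L adjoint (U g)) = V g ∘L I x ρ ∘L adjoint (V g)) := by
  classical
  have mc : ∀ A B : K →L[ℂ] K, A ∘L B = A * B := fun _ _ => rfl
  have hm1 : ∀ g h : G, m g h * (starRingEnd ℂ) (m g h) = 1 := by
    intro g h
    rw [Complex.mul_conj]; norm_cast
    simp [Complex.normSq_eq_norm_sq, hm g h]
  -- sandwich lemma
  have sand : ∀ (g h : G) (T : K →L[ℂ] K),
      V g ∘L (V h ∘L T ∘L adjoint (V h)) ∘L adjoint (V g)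
        = V (g * h) ∘L T ∘L adjoint (V (g * h)) := by
    intro g h T
    rw [hVproj g h]
    simp only [map_smulₛₗ, adjoint_comp, smul_comp, comp_smul, smul_smul, RingHom.id_apply]
    rw [mul_comm, hm1 g h, one_smul]
    simp only [← comp_assoc]
  have sandM : ∀ (g h : G) (T : K →L[ℂ] K),
      V g * (V h * T * adjoint (V h)) * adjoint (V g)
        = V (g * h) * T * adjoint (V (g * h)) := by
    intro g h T
    have := sand g h T
    simpa only [mc, mul_assoc] using this
  -- conjugation by a unitary preserves trace (on K)
  have trV : ∀ (g : G) (A : K →L[ℂ] K),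
      LinearMap.trace ℂ K ((V g ∘L A ∘L adjoint (V g) : K →L[ℂ] K) : K →ₗ[ℂ] K)
        = LinearMap.trace ℂ K (A : K →ₗ[ℂ] K) := by
    intro g A
    have h1 : ((adjoint (V g) : K →L[ℂ] K) : K →ₗ[ℂ] K)
        * ((V g : K →L[ℂ] K) : K →ₗ[ℂ] K) = 1 :=
      congrArg (fun T : K →L[ℂ] K => (T : K →ₗ[ℂ] K)) (hVu g).1
    have h2 : ((V g ∘L A ∘L adjoint (V g) : K →L[ℂ] K) : K →ₗ[ℂ] K)
        = ((V g : K →L[ℂ] K) : K →ₗ[ℂ] K)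
            * (((A : K →L[ℂ] K) : K →ₗ[ℂ] K)
                * ((adjoint (V g) : K →L[ℂ] K) : K →ₗ[ℂ] K)) := rfl
    rw [h2, LinearMap.trace_mul_comm, mul_assoc, h1, mul_one]
  -- stabilizer invariance of σ
  have stab : ∀ (x : X) (h : G), h • b x = b x →
      V h ∘L σ x ∘L adjoint (V h) = σ x := by
    intro x h hh
    have hhinv : h⁻¹ • b x = b x := by
      conv_lhs => rw [← hh]
      rw [← mul_smul, inv_mul_cancel, one_smul]
    rw [hσ x]
    simp only [mc, mul_smul_comm, smul_mul_assoc]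
    congr 1
    rw [Finset.sum_mul, Finset.mul_sum]
    refine Finset.sum_equiv (Equiv.mulLeft h) ?_ ?_
    · intro k
      simp only [Finset.mem_filter, Finset.mem_univ, true_and, Equiv.coe_mulLeft]
      constructor
      · intro hk; rw [mul_smul, hk, hh]
      · intro hk
        have : h⁻¹ • ((h * k) • b x) = h⁻¹ • b x := by rw [hk]
        rwa [← mul_smul, ← mul_assoc, inv_mul_cancel, one_mul, hhinv] at this
    · intro k _
      simpa only [mul_assoc, Equiv.coe_mulLeft] using sandM h k (σ' x)
  -- trace of σ is 1
  have trσ : ∀ x, LinearMap.trace ℂ K ((σ x : K →L[ℂ] K) : K →ₗ[ℂ] K) = 1 := by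
    intro x
    have h1 : (1 : G) ∈ Finset.univ.filter (fun h : G => h • b x = b x) := by
      simp [one_smul]
    have hc : (((Finset.univ.filter fun h : G => h • b x = b x).card : ℂ)) ≠ 0 := by
      exact_mod_cast Nat.cast_ne_zero.mpr (Finset.card_ne_zero_of_mem h1)
    rw [hσ x]
    rw [ContinuousLinearMap.coe_smul, map_smul, ContinuousLinearMap.coe_sum, map_sum]
    rw [Finset.sum_congr rfl (fun h _ => by rw [trV h (σ' x), hσ'tr x])]
    simp only [Finset.sum_const, nsmul_eq_mul, mul_one, smul_eq_mul]
    exact inv_mul_cancel₀ hc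
  -- well-definedness
  have wd : ∀ (g' : G) (x : X), g' • b x = x →
      V g' ∘L σ x ∘L adjoint (V g') = V (gx x) ∘L σ x ∘L adjoint (V (gx x)) := by
    intro g' x hg'
    have hh : (g'⁻¹ * gx x) • b x = b x := by
      rw [mul_smul, hgx x, inv_smul_eq_iff]
      exact hg'.symm
    conv_rhs => rw [show gx x = g' * (g'⁻¹ * gx x) by group]
    rw [← sand g' (g'⁻¹ * gx x) (σ x), stab x (g'⁻¹ * gx x) hh]
  refine ⟨?_, wd, ?_⟩
  · -- I measures M
    intro x ρ _ _
    rw [hI x ρ, ContinuousLinearMap.coe_smul, map_smul, trV (gx x) (σ x), trσ x,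
      smul_eq_mul, mul_one]
  · -- covariance
    intro g x ρ
    rw [hI, hI]
    have hσeq : σ (g • x) = σ x := by
      rw [hσ (g • x), hσ x, hb g x, hσ'orb g x]
    -- trace part
    have mcH : ∀ A B : H →L[ℂ] H, A ∘L B = A * B := fun _ _ => rfl
    have trU : ∀ (A : H →L[ℂ] H),
        LinearMap.trace ℂ H ((U g ∘L A ∘L adjoint (U g) : H →L[ℂ] H) : H →ₗ[ℂ] H)
          = LinearMap.trace ℂ H (A : H →ₗ[ℂ] H) := by
      intro A
      have h1 : ((adjoint (U g) : H →L[ℂ] H) : H →ₗ[ℂ] H)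
          * ((U g : H →L[ℂ] H) : H →ₗ[ℂ] H) = 1 :=
        congrArg (fun T : H →L[ℂ] H => (T : H →ₗ[ℂ] H)) (hUu g).1
      have h2 : ((U g ∘L A ∘L adjoint (U g) : H →L[ℂ] H) : H →ₗ[ℂ] H)
          = ((U g : H →L[ℂ] H) : H →ₗ[ℂ] H)
              * (((A : H →L[ℂ] H) : H →ₗ[ℂ] H)
                  * ((adjoint (U g) : H →L[ℂ] H) : H →ₗ[ℂ] H)) := rfl
      rw [h2, LinearMap.trace_mul_comm, mul_assoc, h1, mul_one]
    have key : (U g ∘L ρ ∘L adjoint (U g)) ∘L (U g ∘L M x ∘L adjoint (U g))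
        = U g ∘L (ρ ∘L M x) ∘L adjoint (U g) := by
      simp only [mcH, mul_assoc]
      rw [← mul_assoc (adjoint (U g)) (U g),
        show adjoint (U g) * U g = (1 : H →L[ℂ] H) from (hUu g).1, one_mul]
    have htr : LinearMap.trace ℂ H
        (((U g ∘L ρ ∘L adjoint (U g)) ∘L M (g • x) : H →L[ℂ] H) : H →ₗ[ℂ] H)
        = LinearMap.trace ℂ H ((ρ ∘L M x : H →L[ℂ] H) : H →ₗ[ℂ] H) := by
      rw [hMcov g x, key, trU (ρ ∘L M x)]
    rw [htr]
    -- operator part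
    have hop : V (gx (g • x)) ∘L σ (g • x) ∘L adjoint (V (gx (g • x)))
        = V g ∘L (V (gx x) ∘L σ x ∘L adjoint (V (gx x))) ∘L adjoint (V g) := by
      have hg' : (g * gx x) • b (g • x) = g • x := by
        rw [hb g x, mul_smul, hgx x]
      have := wd (g * gx x) (g • x) hg'
      rw [hσeq] at this
      rw [hσeq, ← this, sand g (gx x) (σ x)]
    rw [hop]
    simp only [comp_smul, smul_comp]
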